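/- For the standard G₂ 4-form σ₀ = e^{3456}+e^{1256}+e^{1234}+e^{2467}-e^{2357}-e^{1457}-e^{1367} on ℝ⁷ and any two linearly independent vectors X, Y ∈ ℝ⁷, the 2-form ι_Xι_Yσ₀ satisfies (ι_Xι_Yσ₀)∧(ι_Xι_Yσ₀) ≠ 0 in Λ⁴(ℝ⁷)*. -/

import Mathlib

set_option maxHeartbeats 2000000


noncomputable section

/-- We model the dual `g*` of a 7-dimensional real Lie algebra on `ℝ⁷`. -/
abbrev V7 : Type := Fin 7 → ℝ

/-- The exterior algebra `Λ•g*` of forms. -/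
abbrev E7 : Type := ExteriorAlgebra ℝ V7

/-- The generators `e^1, …, e^7` (indexed `0, …, 6`). -/
def ε (i : Fin 7) : E7 := ExteriorAlgebra.ι ℝ (Pi.single i 1)

/-- The degree-`k` component `Λ^k g*` of the exterior algebra. -/
def deg (k : ℕ) : Submodule ℝ E7 :=
  LinearMap.range (ExteriorAlgebra.ι ℝ : V7 →ₗ[ℝ] E7) ^ k

/-- Dualization `g → g**` induced by the standard basis (identifying `g ≅ ℝ⁷`). -/
def dualize : V7 →ₗ[ℝ] Module.Dual ℝ V7 := (Pi.basisFun ℝ (Fin 7)).toDual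

/-- Interior product (contraction) `ι_v` of forms with a vector `v ∈ g`. -/
def ic (v : V7) : E7 →ₗ[ℝ] E7 := CliffordAlgebra.contractLeft (dualize v)

lemma ic_sq (v : V7) : (ic v) * (ic v) = 0 := by
  ext x
  simp [ic, Module.End.mul_apply, CliffordAlgebra.contractLeft_contractLeft]

/-- Contraction of forms by multivectors (identified with elements of `E7` via the
basis), extended multiplicatively from contraction by vectors. -/
def contra : E7 →ₐ[ℝ] Module.End ℝ E7 :=
  ExteriorAlgebra.lift ℝ
    ⟨{ toFun := ic,
       map_add' := by intro a b; ext x; simp [ic],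
       map_smul' := by intro c a; ext x; simp [ic] }, fun v => ic_sq v⟩

/-- The standard volume form `e^{1234567}`. -/
def vol7 : E7 := ε 0 * ε 1 * ε 2 * ε 3 * ε 4 * ε 5 * ε 6

/-- The standard `G₂` 3-form
`φ₀ = e^{127}+e^{347}+e^{567}+e^{135}-e^{146}-e^{236}-e^{245}`. -/
def phi0 : E7 :=
  ε 0*ε 1*ε 6 + ε 2*ε 3*ε 6 + ε 4*ε 5*ε 6 + ε 0*ε 2*ε 4
    - ε 0*ε 3*ε 5 - ε 1*ε 2*ε 5 - ε 1*ε 3*ε 4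

/-- The standard `G₂` 4-form
`σ₀ = e^{3456}+e^{1256}+e^{1234}+e^{2467}-e^{2357}-e^{1457}-e^{1367}` (the Hodge dual
of `φ₀` for the Euclidean metric and standard orientation). -/
def sigma0 : E7 :=
  ε 2*ε 3*ε 4*ε 5 + ε 0*ε 1*ε 4*ε 5 + ε 0*ε 1*ε 2*ε 3 + ε 1*ε 3*ε 5*ε 6
    - ε 1*ε 2*ε 4*ε 6 - ε 0*ε 3*ε 4*ε 6 - ε 0*ε 2*ε 5*ε 6

/-- A 4-form is positive (stable) if it lies in the `GL(7,ℝ)`-orbit of the standard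
`G₂` 4-form `σ₀`. -/
def Positive4 (σ : E7) : Prop :=
  ∃ A : V7 ≃ₗ[ℝ] V7, ExteriorAlgebra.map (A.toLinearMap) sigma0 = σ

/-- `IsCE dg D` says that `D` is the Chevalley–Eilenberg differential, extended as an
odd (degree-1) derivation to `Λ•g*`, of the Lie algebra whose structure equations are
`d e^i = dg i`: it kills constants and satisfies the graded Leibniz rule against
degree-one elements (this characterizes `D` uniquely). -/
def IsCE (dg : Fin 7 → E7) (D : E7 →ₗ[ℝ] E7) : Prop :=
  D 1 = 0 ∧ ∀ (i : Fin 7) (y : E7), D (ε i * y) = dg i * y - ε i * D y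


/-! ### Auxiliary machinery -/

lemma dualize_single (v : V7) (i : Fin 7) : dualize v (Pi.single i 1) = v i := by
  have h : (Pi.single i 1 : V7) = Pi.basisFun ℝ (Fin 7) i := by
    simp [Pi.basisFun_apply]
  rw [dualize, h, Module.Basis.toDual_apply_left, Pi.basisFun_repr]

lemma ic_eps (v : V7) (i : Fin 7) : ic v (ε i) = algebraMap ℝ E7 (v i) := by
  rw [ic, ε, CliffordAlgebra.contractLeft_ι, dualize_single]

lemma ic_mul (v : V7) (i : Fin 7) (x : E7) :
    ic v (ε i * x) = v i • x - ε i * ic v x := by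
  rw [ic, ε, CliffordAlgebra.contractLeft_ι_mul, dualize_single]

lemma mul_alg (x : E7) (r : ℝ) : x * algebraMap ℝ E7 r = r • x := by
  rw [← Algebra.commutes, ← Algebra.smul_def]

lemma ic_one (v : V7) : ic v (1 : E7) = 0 := by
  simp [ic]

lemma eps_sq (i : Fin 7) : ε i * ε i = 0 := ExteriorAlgebra.ι_sq_zero _

lemma eps_sq' (i : Fin 7) (x : E7) : ε i * (ε i * x) = 0 := by
  rw [← mul_assoc, eps_sq, zero_mul]

lemma eps_comm (i j : Fin 7) (_h : j < i) : ε i * ε j = -(ε j * ε i) :=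
  eq_neg_of_add_eq_zero_left (ExteriorAlgebra.ι_add_mul_swap _ _)

lemma eps_comm' (i j : Fin 7) (h : j < i) (x : E7) :
    ε i * (ε j * x) = -(ε j * (ε i * x)) := by
  rw [← mul_assoc, eps_comm i j h, neg_mul, mul_assoc]

/-- The 3-form `ψ` with `σ₀ = ⋆ψ`. -/
def psi7 : E7 :=
  ε 0 * (ε 1 * ε 6) + ε 2 * (ε 3 * ε 6) + ε 4 * (ε 5 * ε 6) - ε 0 * (ε 2 * ε 4)
    + ε 0 * (ε 3 * ε 5) + ε 1 * (ε 2 * ε 5) + ε 1 * (ε 3 * ε 4)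

def gramf (X Y : V7) : ℝ :=
  (X 0*X 0 + X 1*X 1 + X 2*X 2 + X 3*X 3 + X 4*X 4 + X 5*X 5 + X 6*X 6) *
    (Y 0*Y 0 + Y 1*Y 1 + Y 2*Y 2 + Y 3*Y 3 + Y 4*Y 4 + Y 5*Y 5 + Y 6*Y 6) -
  (X 0*Y 0 + X 1*Y 1 + X 2*Y 2 + X 3*Y 3 + X 4*Y 4 + X 5*Y 5 + X 6*Y 6) ^ 2

def Wf (X Y : V7) : E7 :=
  (X 5*Y 4 - X 4*Y 5 + X 3*Y 2 - X 2*Y 3) • (ε 0 * (ε 1))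
    + (-X 6*Y 5 + X 5*Y 6 - X 3*Y 1 + X 1*Y 3) • (ε 0 * (ε 2))
    + (-X 6*Y 4 + X 4*Y 6 + X 2*Y 1 - X 1*Y 2) • (ε 0 * (ε 3))
    + (X 6*Y 3 - X 5*Y 1 - X 3*Y 6 + X 1*Y 5) • (ε 0 * (ε 4))
    + (X 6*Y 2 + X 4*Y 1 - X 2*Y 6 - X 1*Y 4) • (ε 0 * (ε 5))
    + (-X 5*Y 2 - X 4*Y 3 + X 3*Y 4 + X 2*Y 5) • (ε 0 * (ε 6))
    + (-X 6*Y 4 + X 4*Y 6 + X 3*Y 0 - X 0*Y 3) • (ε 1 * (ε 2))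
    + (X 6*Y 5 - X 5*Y 6 - X 2*Y 0 + X 0*Y 2) • (ε 1 * (ε 3))
    + (X 6*Y 2 + X 5*Y 0 - X 2*Y 6 - X 0*Y 5) • (ε 1 * (ε 4))
    + (-X 6*Y 3 - X 4*Y 0 + X 3*Y 6 + X 0*Y 4) • (ε 1 * (ε 5))
    + (X 5*Y 3 - X 4*Y 2 - X 3*Y 5 + X 2*Y 4) • (ε 1 * (ε 6))
    + (X 5*Y 4 - X 4*Y 5 + X 1*Y 0 - X 0*Y 1) • (ε 2 * (ε 3))
    + (-X 6*Y 1 - X 5*Y 3 + X 3*Y 5 + X 1*Y 6) • (ε 2 * (ε 4))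
    + (-X 6*Y 0 + X 4*Y 3 - X 3*Y 4 + X 0*Y 6) • (ε 2 * (ε 5))
    + (X 5*Y 0 + X 4*Y 1 - X 1*Y 4 - X 0*Y 5) • (ε 2 * (ε 6))
    + (-X 6*Y 0 + X 5*Y 2 - X 2*Y 5 + X 0*Y 6) • (ε 3 * (ε 4))
    + (X 6*Y 1 - X 4*Y 2 + X 2*Y 4 - X 1*Y 6) • (ε 3 * (ε 5))
    + (-X 5*Y 1 + X 4*Y 0 + X 1*Y 5 - X 0*Y 4) • (ε 3 * (ε 6))
    + (X 3*Y 2 - X 2*Y 3 + X 1*Y 0 - X 0*Y 1) • (ε 4 * (ε 5))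
    + (-X 3*Y 0 - X 2*Y 1 + X 1*Y 2 + X 0*Y 3) • (ε 4 * (ε 6))
    + (X 3*Y 1 - X 2*Y 0 - X 1*Y 3 + X 0*Y 2) • (ε 5 * (ε 6))

def P5f (X Y : V7) : E7 :=
  (2*X 6*Y 5 - 2*X 5*Y 6 + X 3*Y 1 - X 2*Y 0 - X 1*Y 3 + X 0*Y 2) • (ε 0 * (ε 1 * (ε 2 * (ε 3 * (ε 4)))))
    + (-2*X 6*Y 4 + 2*X 4*Y 6 + X 3*Y 0 + X 2*Y 1 - X 1*Y 2 - X 0*Y 3) • (ε 0 * (ε 1 * (ε 2 * (ε 3 * (ε 5)))))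
    + (2*X 5*Y 4 - 2*X 4*Y 5 + X 3*Y 2 - X 2*Y 3 + X 1*Y 0 - X 0*Y 1) • (ε 0 * (ε 1 * (ε 2 * (ε 3 * (ε 6)))))
    + (2*X 6*Y 3 - X 5*Y 1 + X 4*Y 0 - 2*X 3*Y 6 + X 1*Y 5 - X 0*Y 4) • (ε 0 * (ε 1 * (ε 2 * (ε 4 * (ε 5)))))
    + (-X 6*Y 1 - 2*X 5*Y 3 + X 4*Y 2 + 2*X 3*Y 5 - X 2*Y 4 + X 1*Y 6) • (ε 0 * (ε 1 * (ε 2 * (ε 4 * (ε 6)))))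
    + (-X 6*Y 0 + X 5*Y 2 + 2*X 4*Y 3 - 2*X 3*Y 4 - X 2*Y 5 + X 0*Y 6) • (ε 0 * (ε 1 * (ε 2 * (ε 5 * (ε 6)))))
    + (-2*X 6*Y 2 - X 5*Y 0 - X 4*Y 1 + 2*X 2*Y 6 + X 1*Y 4 + X 0*Y 5) • (ε 0 * (ε 1 * (ε 3 * (ε 4 * (ε 5)))))
    + (-X 6*Y 0 + 2*X 5*Y 2 + X 4*Y 3 - X 3*Y 4 - 2*X 2*Y 5 + X 0*Y 6) • (ε 0 * (ε 1 * (ε 3 * (ε 4 * (ε 6)))))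
    + (X 6*Y 1 + X 5*Y 3 - 2*X 4*Y 2 - X 3*Y 5 + 2*X 2*Y 4 - X 1*Y 6) • (ε 0 * (ε 1 * (ε 3 * (ε 5 * (ε 6)))))
    + (X 5*Y 4 - X 4*Y 5 + 2*X 3*Y 2 - 2*X 2*Y 3 + X 1*Y 0 - X 0*Y 1) • (ε 0 * (ε 1 * (ε 4 * (ε 5 * (ε 6)))))
    + (2*X 6*Y 1 + X 5*Y 3 - X 4*Y 2 - X 3*Y 5 + X 2*Y 4 - 2*X 1*Y 6) • (ε 0 * (ε 2 * (ε 3 * (ε 4 * (ε 5)))))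
    + (X 6*Y 3 - 2*X 5*Y 1 + X 4*Y 0 - X 3*Y 6 + 2*X 1*Y 5 - X 0*Y 4) • (ε 0 * (ε 2 * (ε 3 * (ε 4 * (ε 6)))))
    + (X 6*Y 2 + X 5*Y 0 + 2*X 4*Y 1 - X 2*Y 6 - 2*X 1*Y 4 - X 0*Y 5) • (ε 0 * (ε 2 * (ε 3 * (ε 5 * (ε 6)))))
    + (-X 6*Y 5 + X 5*Y 6 - 2*X 3*Y 1 + X 2*Y 0 + 2*X 1*Y 3 - X 0*Y 2) • (ε 0 * (ε 2 * (ε 4 * (ε 5 * (ε 6)))))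
    + (-X 6*Y 4 + X 4*Y 6 + X 3*Y 0 + 2*X 2*Y 1 - 2*X 1*Y 2 - X 0*Y 3) • (ε 0 * (ε 3 * (ε 4 * (ε 5 * (ε 6)))))
    + (-2*X 6*Y 0 + X 5*Y 2 + X 4*Y 3 - X 3*Y 4 - X 2*Y 5 + 2*X 0*Y 6) • (ε 1 * (ε 2 * (ε 3 * (ε 4 * (ε 5)))))
    + (X 6*Y 2 + 2*X 5*Y 0 + X 4*Y 1 - X 2*Y 6 - X 1*Y 4 - 2*X 0*Y 5) • (ε 1 * (ε 2 * (ε 3 * (ε 4 * (ε 6)))))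
    + (-X 6*Y 3 + X 5*Y 1 - 2*X 4*Y 0 + X 3*Y 6 - X 1*Y 5 + 2*X 0*Y 4) • (ε 1 * (ε 2 * (ε 3 * (ε 5 * (ε 6)))))
    + (-X 6*Y 4 + X 4*Y 6 + 2*X 3*Y 0 + X 2*Y 1 - X 1*Y 2 - 2*X 0*Y 3) • (ε 1 * (ε 2 * (ε 4 * (ε 5 * (ε 6)))))
    + (X 6*Y 5 - X 5*Y 6 + X 3*Y 1 - 2*X 2*Y 0 - X 1*Y 3 + 2*X 0*Y 2) • (ε 1 * (ε 3 * (ε 4 * (ε 5 * (ε 6)))))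
    + (X 5*Y 4 - X 4*Y 5 + X 3*Y 2 - X 2*Y 3 + 2*X 1*Y 0 - 2*X 0*Y 1) • (ε 2 * (ε 3 * (ε 4 * (ε 5 * (ε 6)))))

lemma hw (X Y : V7) : ic X (ic Y sigma0) = Wf X Y := by
  simp only [sigma0, mul_assoc, map_add, map_sub, map_smul, ic_mul, ic_eps, mul_sub, mul_add,
    mul_smul_comm, smul_sub, smul_add, smul_smul, mul_alg]
  rw [Wf]
  module

lemma hP (X Y : V7) : Wf X Y * psi7 = P5f X Y := by
  rw [Wf, psi7]
  simp only [mul_add, add_mul, sub_mul, mul_sub, smul_mul_assoc, mul_smul_comm, smul_smul,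
    mul_assoc]
  simp (config := { decide := true }) only [eps_sq', eps_sq, eps_comm', eps_comm, mul_neg,
    neg_mul, smul_neg, mul_zero, zero_mul, smul_zero, neg_neg, mul_assoc]
  rw [P5f]
  module

lemma hkey (X Y : V7) : Wf X Y * P5f X Y = (2 * gramf X Y) • vol7 := by
  rw [Wf, P5f]
  simp only [mul_add, add_mul, sub_mul, mul_sub, smul_mul_assoc, mul_smul_comm, smul_smul,
    mul_assoc]
  simp (config := { decide := true }) only [eps_sq', eps_sq, eps_comm', eps_comm, mul_neg,
    neg_mul, smul_neg, mul_zero, zero_mul, smul_zero, neg_neg, mul_assoc]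
  rw [vol7, gramf]
  simp only [mul_assoc]
  module

lemma vol7_ne_zero : vol7 ≠ 0 := by
  intro h
  have h2 := congrArg (fun z => ic (Pi.single 0 1) (ic (Pi.single 1 1) (ic (Pi.single 2 1)
    (ic (Pi.single 3 1) (ic (Pi.single 4 1) (ic (Pi.single 5 1) (ic (Pi.single 6 1) z))))))) h
  simp only [vol7, mul_assoc] at h2
  simp (config := { decide := true }) only [ic_mul, ic_eps, ic_one, map_sub, map_smul, map_zero, map_mul,
    Pi.single_apply, if_true, if_false, mul_sub, mul_add, mul_smul_comm, smul_sub, smul_add,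
    smul_smul, mul_alg, one_smul, zero_smul, smul_zero, sub_zero, zero_sub, mul_zero, zero_mul,
    map_one, map_neg, neg_neg, neg_zero, mul_one, one_mul] at h2
  exact one_ne_zero (neg_eq_zero.mp h2)

lemma gramf_ne_zero (X Y : V7) (h : LinearIndependent ℝ ![X, Y]) : gramf X Y ≠ 0 := by
  rw [LinearIndependent.pair_iff] at h
  intro h0
  set a := X 0*Y 0 + X 1*Y 1 + X 2*Y 2 + X 3*Y 3 + X 4*Y 4 + X 5*Y 5 + X 6*Y 6 with ha
  set b := X 0*X 0 + X 1*X 1 + X 2*X 2 + X 3*X 3 + X 4*X 4 + X 5*X 5 + X 6*X 6 with hb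
  have hsum : ∑ i : Fin 7, (b * Y i - a * X i) ^ 2 = 0 := by
    have e : ∑ i : Fin 7, (b * Y i - a * X i) ^ 2 = b * gramf X Y := by
      simp only [Fin.sum_univ_seven, gramf, ← ha, ← hb]; ring
    rw [e, h0, mul_zero]
  have hZ : ∀ i : Fin 7, b * Y i - a * X i = 0 := by
    intro i
    have := (Finset.sum_eq_zero_iff_of_nonneg (fun i _ => sq_nonneg (b * Y i - a * X i))).mp
      hsum i (Finset.mem_univ i)
    exact pow_eq_zero_iff (two_ne_zero) |>.mp this
  have hlin : (-a) • X + b • Y = 0 := by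
    funext i
    have := hZ i
    simp only [Pi.add_apply, Pi.smul_apply, smul_eq_mul, Pi.zero_apply]
    linarith
  have hb0 : b = 0 := (h (-a) b hlin).2
  have hX : ∀ i : Fin 7, X i = 0 := by
    intro i
    have hsb : ∑ i : Fin 7, X i ^ 2 = 0 := by
      simp only [Fin.sum_univ_seven]; rw [hb] at hb0; nlinarith [hb0]
    have := (Finset.sum_eq_zero_iff_of_nonneg (fun i _ => sq_nonneg (X i))).mp
      hsb i (Finset.mem_univ i)
    exact pow_eq_zero_iff (two_ne_zero) |>.mp this
  have hX0 : X = 0 := funext hX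
  have h1 : (1 : ℝ) • X + (0 : ℝ) • Y = 0 := by rw [hX0]; simp
  exact one_ne_zero (h 1 0 h1).1


/-- for the standard `G₂` 4-form `σ₀` and any two linearly independent
vectors `X, Y ∈ ℝ⁷`, the 2-form `ι_X ι_Y σ₀` has nonzero square. -/
theorem stmt8_double_contraction_square_ne_zero (X Y : V7)
    (hXY : LinearIndependent ℝ ![X, Y]) :
    ic X (ic Y sigma0) * ic X (ic Y sigma0) ≠ 0 := by
  intro h0
  have h1 : Wf X Y * Wf X Y = 0 := by rw [← hw X Y]; exact h0
  have h2 : (2 * gramf X Y) • vol7 = 0 := by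
    rw [← hkey, ← hP X Y, ← mul_assoc, h1, zero_mul]
  rcases smul_eq_zero.mp h2 with hc | hv
  · exact mul_ne_zero two_ne_zero (gramf_ne_zero X Y hXY) hc
  · exact vol7_ne_zero hv
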